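/- Every bijection f : 𝔹^n → 𝔹^n can be written as a composition of at most 2n single-target gates (in fact at most 2n − 1 for n ≥ 1). -/

import Mathlib

/-- A single-target gate with target `i` and control function `c` (which must
not depend on coordinate `i`): flips coordinate `i` iff `c` evaluates to true. -/
def stg {n : ℕ} (i : Fin n) (c : (Fin n → Bool) → Bool) (x : Fin n → Bool) : Fin n → Bool :=
  Function.update x i (xor (x i) (c x))

/-- `c` does not depend on coordinate `i`, i.e. it is a function of the
remaining `n - 1` coordinates. -/
def IndepOf {n : ℕ} (i : Fin n) (c : (Fin n → Bool) → Bool) : Prop :=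
  ∀ x y : Fin n → Bool, (∀ j, j ≠ i → x j = y j) → c x = c y


lemma decide_lt_swap {a b : ℕ} (h : a ≠ b) : decide (b < a) = !decide (a < b) := by
  rcases h.lt_or_gt with h' | h'
  · simp [h', Nat.lt_asymm h']
  · simp [h', Nat.lt_asymm h']

theorem twoColoring {A : Type} [Fintype A] [DecidableEq A] (σ τ : Equiv.Perm A)
    (hσ2 : ∀ x, σ (σ x) = x) (hτ2 : ∀ x, τ (τ x) = x)
    (hσ : ∀ x, σ x ≠ x) (hτ : ∀ x, τ x ≠ x) :
    ∃ s : A → Bool, (∀ x, s (σ x) = !s x) ∧ (∀ x, s (τ x) = !s x) := by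
  classical
  set π : Equiv.Perm A := τ * σ with hπ
  have hσi : σ⁻¹ = σ := by
    ext x
    show σ.symm x = σ x
    rw [Equiv.symm_apply_eq]
    exact (hσ2 x).symm
  have hτi : τ⁻¹ = τ := by
    ext x
    show τ.symm x = τ x
    rw [Equiv.symm_apply_eq]
    exact (hτ2 x).symm
  have hσ1 : σ * σ = 1 := by nth_rewrite 2 [← hσi]; exact mul_inv_cancel σ
  have hπinv : π⁻¹ = σ * τ := by rw [hπ, mul_inv_rev, hσi, hτi]
  have h1 : σ * π * σ⁻¹ = π⁻¹ := by
    rw [hσi, hπ, hπinv, ← mul_assoc, mul_assoc (σ * τ) σ σ, hσ1, mul_one]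
  have hcz : ∀ m : ℤ, σ * π ^ m = π ^ (-m) * σ := by
    intro m
    have h2 : (σ * π * σ⁻¹) ^ m = σ * π ^ m * σ⁻¹ := conj_zpow
    rw [h1] at h2
    have h3 : π ^ (-m) = σ * π ^ m * σ⁻¹ := by rw [← h2, zpow_neg, inv_zpow]
    rw [h3, hσi, mul_assoc, hσ1, mul_one]
  have hczp : ∀ (m : ℤ) (y : A), σ ((π ^ m) y) = (π ^ (-m)) (σ y) := by
    intro m y
    have : (σ * π ^ m) y = (π ^ (-m) * σ) y := by rw [hcz]
    simpa [Equiv.Perm.mul_apply] using this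
  have hcancel : ∀ (m : ℤ) (y : A), (π ^ m) ((π ^ (-m)) y) = y := by
    intro m y
    rw [zpow_neg]
    exact Equiv.apply_symm_apply _ _
  have keyfp : ∀ (j : ℤ) (x : A), (π ^ j) x ≠ σ x := by
    intro j x hEq
    rcases Int.even_or_odd j with ⟨m, hm⟩ | ⟨m, hm⟩
    · have hsplit : (π ^ j) x = (π ^ m) ((π ^ m) x) := by
        rw [hm, zpow_add, Equiv.Perm.mul_apply]
      have h0 : σ x = (π ^ m) ((π ^ m) x) := by rw [← hsplit, hEq]
      have h4 : x = (π ^ (-m)) (σ ((π ^ m) x)) := by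
        have := congrArg σ h0
        rwa [hσ2, hczp] at this
      have h5 : (π ^ m) x = σ ((π ^ m) x) := by
        have := congrArg (π ^ m) h4
        rwa [hcancel] at this
      exact hσ _ h5.symm
    · have hsplit : (π ^ j) x = (π ^ m) (π ((π ^ m) x)) := by
        rw [hm, show (2 * m + 1 : ℤ) = m + 1 + m by ring, zpow_add, zpow_add, zpow_one,
          Equiv.Perm.mul_apply, Equiv.Perm.mul_apply]
      have h0 : σ x = (π ^ m) (π ((π ^ m) x)) := by rw [← hsplit, hEq]
      have h4 : x = (π ^ (-m)) (σ (π ((π ^ m) x))) := by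
        have := congrArg σ h0
        rwa [hσ2, hczp] at this
      have h5 : (π ^ m) x = σ (π ((π ^ m) x)) := by
        have := congrArg (π ^ m) h4
        rwa [hcancel] at this
      set y := (π ^ m) x with hy
      have hπy : π y = τ (σ y) := by rw [hπ, Equiv.Perm.mul_apply]
      rw [hπy] at h5
      have h6 : σ y = τ (σ y) := by
        have := congrArg σ h5
        rwa [hσ2] at this
      exact hτ _ h6.symm
  -- orbit keys
  let e := Fintype.equivFin A
  have hfne : ∀ x : A, (((Finset.univ.filter (fun y => π.SameCycle x y)).image
      (fun y => (e y : ℕ)))).Nonempty := by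
    intro x
    exact ⟨e x, Finset.mem_image_of_mem _ (by simp [Equiv.Perm.SameCycle.refl])⟩
  let key : A → ℕ := fun x =>
    ((Finset.univ.filter (fun y => π.SameCycle x y)).image (fun y => (e y : ℕ))).min' (hfne x)
  have key_eq : ∀ x y, π.SameCycle x y → key x = key y := by
    intro x y h
    have : (Finset.univ.filter (fun z => π.SameCycle x z))
        = (Finset.univ.filter (fun z => π.SameCycle y z)) := by
      ext z
      simp only [Finset.mem_filter, Finset.mem_univ, true_and]
      exact ⟨fun h' => h.symm.trans h', fun h' => h.trans h'⟩
    simp only [key, this]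
  have key_inj : ∀ x y, key x = key y → π.SameCycle x y := by
    intro x y h
    have hx := Finset.min'_mem _ (hfne x)
    have hy := Finset.min'_mem _ (hfne y)
    rw [Finset.mem_image] at hx hy
    obtain ⟨u, hu, hu2⟩ := hx
    obtain ⟨v, hv, hv2⟩ := hy
    rw [Finset.mem_filter] at hu hv
    have huv : u = v := by
      have : (e u : ℕ) = (e v : ℕ) := by rw [hu2, hv2]; exact h
      exact e.injective (Fin.ext this)
    exact hu.2.trans (huv ▸ hv.2.symm)
  have key_ne : ∀ x, key x ≠ key (σ x) := by
    intro x h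
    obtain ⟨j, hj⟩ := key_inj _ _ h
    exact keyfp j x hj
  refine ⟨fun x => decide (key x < key (σ x)), ?_, ?_⟩
  · intro x
    have h1 : key (σ (σ x)) = key x := by rw [hσ2]
    show decide (key (σ x) < key (σ (σ x))) = !decide (key x < key (σ x))
    rw [h1]
    exact decide_lt_swap (key_ne x)
  · intro x
    have h1 : key (τ x) = key (σ x) := by
      apply key_eq
      exact ⟨-1, by simp [hπinv, Equiv.Perm.mul_apply, hτ2]⟩
    have h2 : key (σ (τ x)) = key x := by
      apply (key_eq _ _ _).symm
      exact ⟨-1, by simp [hπinv, Equiv.Perm.mul_apply]⟩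
    show decide (key (τ x) < key (σ (τ x))) = !decide (key x < key (σ x))
    rw [h1, h2]
    exact decide_lt_swap (key_ne x)


lemma stg_apply_self {n : ℕ} (i : Fin n) (c : (Fin n → Bool) → Bool) (x : Fin n → Bool) :
    stg i c x i = xor (x i) (c x) := Function.update_self _ _ _

lemma stg_apply_ne {n : ℕ} (i : Fin n) (c : (Fin n → Bool) → Bool) (x : Fin n → Bool)
    {j : Fin n} (h : j ≠ i) : stg i c x j = x j := Function.update_of_ne h _ _

lemma stg_invol {n : ℕ} {i : Fin n} {c : (Fin n → Bool) → Bool} (hc : IndepOf i c)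
    (x : Fin n → Bool) : stg i c (stg i c x) = x := by
  have hcc : c (stg i c x) = c x := hc _ _ (fun j hj => stg_apply_ne i c x hj)
  show Function.update (stg i c x) i (xor (stg i c x i) (c (stg i c x))) = x
  rw [hcc, stg_apply_self, show (stg i c x : Fin n → Bool)
      = Function.update x i (xor (x i) (c x)) from rfl, Function.update_idem]
  rw [show xor (xor (x i) (c x)) (c x) = x i by cases (x i) <;> cases (c x) <;> rfl]
  exact Function.update_eq_self _ _

def stgPerm {n : ℕ} (i : Fin n) (c : (Fin n → Bool) → Bool) (hc : IndepOf i c) :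
    Equiv.Perm (Fin n → Bool) :=
  ⟨stg i c, stg i c, stg_invol hc, stg_invol hc⟩

def flipFun {n : ℕ} (i : Fin n) (x : Fin n → Bool) : Fin n → Bool :=
  Function.update x i (!x i)

lemma flipFun_invol {n : ℕ} (i : Fin n) (x : Fin n → Bool) : flipFun i (flipFun i x) = x := by
  show Function.update (flipFun i x) i (!(flipFun i x i)) = x
  rw [show flipFun i x i = !x i from Function.update_self _ _ _,
    show (flipFun i x : Fin n → Bool) = Function.update x i (!x i) from rfl,
    Function.update_idem, Bool.not_not]
  exact Function.update_eq_self _ _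

lemma eq_or_flip {n : ℕ} {i : Fin n} {x y : Fin n → Bool} (h : ∀ j, j ≠ i → x j = y j) :
    y = x ∨ y = flipFun i x := by
  by_cases hi : y i = x i
  · left
    funext j
    by_cases hj : j = i
    · rw [hj]; exact hi
    · exact (h j hj).symm
  · right
    funext j
    by_cases hj : j = i
    · subst hj
      rw [show flipFun j x j = !x j from Function.update_self _ _ _]
      revert hi; cases (y j) <;> cases (x j) <;> simp
    · rw [show flipFun i x j = x j from Function.update_of_ne hj _ _]
      exact (h j hj).symm

/-- Peel lemma: two gates on coordinate `i` conjugate `f` to fix coordinate `i`. -/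
lemma peel {n : ℕ} (f : Equiv.Perm (Fin n → Bool)) (i : Fin n) :
    ∃ c₁ c₂ : (Fin n → Bool) → Bool, IndepOf i c₁ ∧ IndepOf i c₂ ∧
      (∀ x, (stg i c₂ (f (stg i c₁ x))) i = x i) := by
  have hnei : ∀ x : Fin n → Bool, flipFun i x ≠ x := by
    intro x hx
    have := congrFun hx i
    rw [show flipFun i x i = !x i from Function.update_self _ _ _] at this
    exact Bool.not_ne_self _ this
  let σp : Equiv.Perm (Fin n → Bool) := ⟨flipFun i, flipFun i, flipFun_invol i, flipFun_invol i⟩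
  let τp : Equiv.Perm (Fin n → Bool) := (f.trans σp).trans f.symm
  have hσap : ∀ x, σp x = flipFun i x := fun _ => rfl
  have hτap : ∀ x, τp x = f.symm (flipFun i (f x)) := fun _ => rfl
  obtain ⟨s, hs1, hs2⟩ := twoColoring σp τp
    (fun x => flipFun_invol i x)
    (fun x => by
      rw [hτap, hτap, Equiv.apply_symm_apply, flipFun_invol, Equiv.symm_apply_apply])
    (fun x => hnei x)
    (fun x hx => by
      rw [hτap] at hx
      have := congrArg f hx
      rw [Equiv.apply_symm_apply] at this
      exact hnei (f x) this)
  have hsflip : ∀ x, s (flipFun i x) = !s x := hs1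
  have hs'flip : ∀ y, s (f.symm (flipFun i y)) = !s (f.symm y) := by
    intro y
    have := hs2 (f.symm y)
    rwa [hτap, Equiv.apply_symm_apply] at this
  refine ⟨fun x => xor (s x) (x i), fun y => xor (s (f.symm y)) (y i), ?_, ?_, ?_⟩
  · intro x y h
    rcases eq_or_flip h with rfl | rfl
    · rfl
    · show xor (s x) (x i) = xor (s (flipFun i x)) (flipFun i x i)
      rw [hsflip, show flipFun i x i = !x i from Function.update_self _ _ _]
      cases (s x) <;> cases (x i) <;> rfl
  · intro x y h
    rcases eq_or_flip h with rfl | rfl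
    · rfl
    · show xor (s (f.symm x)) (x i) = xor (s (f.symm (flipFun i x))) (flipFun i x i)
      rw [hs'flip, show flipFun i x i = !x i from Function.update_self _ _ _]
      cases (s (f.symm x)) <;> cases (x i) <;> rfl
  · intro x
    rw [stg_apply_self]
    rw [show xor ((f (stg i (fun x => xor (s x) (x i)) x)) i)
        (xor (s (f.symm (f (stg i (fun x => xor (s x) (x i)) x))))
          ((f (stg i (fun x => xor (s x) (x i)) x)) i))
        = s (f.symm (f (stg i (fun x => xor (s x) (x i)) x))) from by
      generalize (f (stg i (fun x => xor (s x) (x i)) x)) = z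
      cases (z i) <;> cases (s (f.symm z)) <;> rfl]
    rw [Equiv.symm_apply_apply]
    -- goal : s (stg i c₁ x) = x i
    have hg1 : stg i (fun x => xor (s x) (x i)) x = Function.update x i (s x) := by
      show Function.update x i (xor (x i) (xor (s x) (x i))) = _
      rw [show xor (x i) (xor (s x) (x i)) = s x by cases (x i) <;> cases (s x) <;> rfl]
    rw [hg1]
    by_cases h : s x = x i
    · rw [show Function.update x i (s x) = x by rw [h]; exact Function.update_eq_self _ _, h]
    · have hsx : s x = !x i := by revert h; cases (s x) <;> cases (x i) <;> simp
      rw [show Function.update x i (s x) = flipFun i x by rw [hsx]; rfl, hsflip, hsx,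
        Bool.not_not]

lemma merge_indep {n : ℕ} {i : Fin n} {c₁ c₂ : (Fin n → Bool) → Bool}
    (h1 : IndepOf i c₁) (h2 : IndepOf i c₂) :
    IndepOf i (fun x => xor (c₁ x) (c₂ (stg i c₁ x))) := by
  intro x y h
  have e1 : c₁ x = c₁ y := h1 x y h
  have e2 : c₂ (stg i c₁ x) = c₂ (stg i c₁ y) := by
    apply h2
    intro j hj
    rw [stg_apply_ne i c₁ x hj, stg_apply_ne i c₁ y hj]
    exact h j hj
  simp only [e1, e2]

lemma merge_apply {n : ℕ} {i : Fin n} (c₁ c₂ : (Fin n → Bool) → Bool) (x : Fin n → Bool) :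
    stg i (fun x => xor (c₁ x) (c₂ (stg i c₁ x))) x = stg i c₂ (stg i c₁ x) := by
  show Function.update x i (xor (x i) (xor (c₁ x) (c₂ (stg i c₁ x))))
      = Function.update (stg i c₁ x) i (xor (stg i c₁ x i) (c₂ (stg i c₁ x)))
  rw [stg_apply_self]
  generalize c₂ (stg i c₁ x) = b
  rw [show (stg i c₁ x : Fin n → Bool) = Function.update x i (xor (x i) (c₁ x)) from rfl,
    Function.update_idem]
  congr 1
  cases (x i) <;> cases (c₁ x) <;> cases b <;> rfl

lemma foldr_apply {n : ℕ} (L : List (Fin n × ((Fin n → Bool) → Bool)))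
    (g : (Fin n → Bool) → (Fin n → Bool)) (x : Fin n → Bool) :
    L.foldr (fun p g => stg p.1 p.2 ∘ g) g x
      = L.foldr (fun p g => stg p.1 p.2 ∘ g) id (g x) := by
  induction L with
  | nil => rfl
  | cons p L ih =>
      show stg p.1 p.2 (L.foldr _ g x) = stg p.1 p.2 (L.foldr _ id (g x))
      rw [ih]

lemma mainLemma {n : ℕ} (k : ℕ) (T : Finset (Fin n)) (f : Equiv.Perm (Fin n → Bool))
    (hcard : T.card = k) (hfix : ∀ x j, j ∉ T → f x j = x j) :
    ∃ L : List (Fin n × ((Fin n → Bool) → Bool)),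
      (∀ p ∈ L, IndepOf p.1 p.2) ∧ L.length ≤ 2 * k - 1 ∧
      ∀ x, f x = L.foldr (fun p g => stg p.1 p.2 ∘ g) id x := by
  induction k generalizing T f with
  | zero =>
      refine ⟨[], by simp, by simp, ?_⟩
      intro x
      have hT : T = ∅ := Finset.card_eq_zero.mp hcard
      have : ∀ j, f x j = x j := fun j => hfix x j (by rw [hT]; exact Finset.notMem_empty j)
      exact funext this
  | succ k ih =>
      have hne : T.Nonempty := Finset.card_pos.mp (by omega)
      obtain ⟨i, hi⟩ := hne
      obtain ⟨c₁, c₂, h1, h2, hmid⟩ := peel f i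
      let m : Equiv.Perm (Fin n → Bool) := ((stgPerm i c₁ h1).trans f).trans (stgPerm i c₂ h2)
      have hm : ∀ x, m x = stg i c₂ (f (stg i c₁ x)) := fun _ => rfl
      have hmfix : ∀ x j, j ∉ T.erase i → m x j = x j := by
        intro x j hj
        by_cases hji : j = i
        · subst hji
          rw [hm]
          exact hmid x
        · have hjT : j ∉ T := by
            intro hjT
            exact hj (Finset.mem_erase.mpr ⟨hji, hjT⟩)
          rw [hm, stg_apply_ne i c₂ _ hji, hfix _ j hjT, stg_apply_ne i c₁ _ hji]
      have hcard' : (T.erase i).card = k := by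
        rw [Finset.card_erase_of_mem hi, hcard]
        omega
      obtain ⟨L', hL'1, hL'2, hL'3⟩ := ih (T.erase i) m hcard' hmfix
      have hf : ∀ x, f x = stg i c₂ (m (stg i c₁ x)) := by
        intro x
        rw [hm, stg_invol h1, stg_invol h2]
      by_cases hk : k = 0
      · subst hk
        have hL'nil : L' = [] := List.eq_nil_of_length_eq_zero (Nat.le_zero.mp hL'2)
        have hmi : ∀ x, m x = x := by
          intro x
          have := hL'3 x
          rw [hL'nil] at this
          exact this
        refine ⟨[(i, fun x => xor (c₁ x) (c₂ (stg i c₁ x)))], ?_, by simp, ?_⟩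
        · intro p hp
          rw [List.mem_singleton] at hp
          subst hp
          exact merge_indep h1 h2
        · intro x
          show f x = stg i (fun x => xor (c₁ x) (c₂ (stg i c₁ x))) (id x)
          rw [hf x, hmi (stg i c₁ x), merge_apply]
          rfl
      · refine ⟨(i, c₂) :: (L' ++ [(i, c₁)]), ?_, ?_, ?_⟩
        · intro p hp
          rcases List.mem_cons.mp hp with rfl | hp'
          · exact h2
          rcases List.mem_append.mp hp' with hp'' | hp''
          · exact hL'1 p hp''
          · rw [List.mem_singleton] at hp''
            subst hp''
            exact h1
        · simp only [List.length_cons, List.length_append, List.length_nil]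
          omega
        · intro x
          rw [hf x]
          have h5 : (((i, c₂) :: (L' ++ [(i, c₁)])).foldr (fun p g => stg p.1 p.2 ∘ g) id) x
              = stg i c₂ ((L' ++ [(i, c₁)]).foldr (fun p g => stg p.1 p.2 ∘ g) id x) := rfl
          rw [h5, List.foldr_append, foldr_apply]
          have h6 : m (stg i c₁ x) = L'.foldr (fun p g => stg p.1 p.2 ∘ g) id
              (([(i, c₁)].foldr (fun p g => stg p.1 p.2 ∘ g) id) x) := by
            rw [show ([(i, c₁)].foldr (fun p g => stg p.1 p.2 ∘ g) id) x = stg i c₁ x from rfl]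
            exact hL'3 _
          rw [h6]

theorem stmt_10 (n : ℕ) (f : (Fin n → Bool) ≃ (Fin n → Bool)) :
    (∃ L : List (Fin n × ((Fin n → Bool) → Bool)),
      (∀ p ∈ L, IndepOf p.1 p.2) ∧ L.length ≤ 2 * n ∧
      ∀ x, f x = L.foldr (fun p g => stg p.1 p.2 ∘ g) id x) ∧
    (1 ≤ n → ∃ L : List (Fin n × ((Fin n → Bool) → Bool)),
      (∀ p ∈ L, IndepOf p.1 p.2) ∧ L.length ≤ 2 * n - 1 ∧
      ∀ x, f x = L.foldr (fun p g => stg p.1 p.2 ∘ g) id x) := by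
  obtain ⟨L, hL1, hL2, hL3⟩ := mainLemma n Finset.univ f (by simp) (by simp)
  exact ⟨⟨L, hL1, by omega, hL3⟩, fun _ => ⟨L, hL1, hL2, hL3⟩⟩
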